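/- Let d ≥ 3, G = Isom(ℝ^d), and let μ be a Borel probability measure on G. Then for every x ∈ ℝ^d the operator norms satisfy ‖S_{|x|}‖ ≤ ‖T_x‖, where T_x = π_x(μ) acts on L²(SO(d)) and S_{|x|} = ρ_{|x|}(μ) acts on L²(𝕊^{d−1}). -/

import Mathlib

open MeasureTheory Matrix NNReal ENNReal Filter Topology

noncomputable section

/-- The special orthogonal group `SO(d)`, realized as the group of `d × d` real orthogonal
matrices of determinant one. -/
abbrev SOd (d : ℕ) : Type := ↥(Matrix.specialOrthogonalGroup (Fin d) ℝ)

/-- Euclidean space `ℝ^d`. -/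
abbrev Ed (d : ℕ) : Type := EuclideanSpace ℝ (Fin d)

instance (d : ℕ) : Group (SOd d) :=
  { (inferInstance : Monoid (SOd d)) with
    inv := fun A => ⟨star A.1, by
      obtain ⟨A, hA⟩ := A
      rw [Matrix.mem_specialOrthogonalGroup_iff] at hA ⊢
      refine ⟨Unitary.star_mem hA.1, ?_⟩
      rw [Matrix.star_eq_conjTranspose, Matrix.det_conjTranspose, hA.2]
      simp⟩
    inv_mul_cancel := fun A => Subtype.ext A.2.1.1 }

/-- The natural (linear, isometric) action of `SO(d)` on `ℝ^d` by matrix-vector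
multiplication. -/
def SOd.act {d : ℕ} (θ : SOd d) (x : Ed d) : Ed d := WithLp.toLp 2 (θ.1.mulVec x)

theorem SOd.act_add {d : ℕ} (θ : SOd d) (x y : Ed d) :
    θ.act (x + y) = θ.act x + θ.act y := congrArg (WithLp.toLp 2) (Matrix.mulVec_add _ _ _)

theorem SOd.act_mul {d : ℕ} (θ₁ θ₂ : SOd d) (x : Ed d) :
    (θ₁ * θ₂).act x = θ₁.act (θ₂.act x) := congrArg (WithLp.toLp 2) (Matrix.mulVec_mulVec _ _ _).symm

theorem SOd.one_act {d : ℕ} (x : Ed d) : (1 : SOd d).act x = x := congrArg (WithLp.toLp 2) (Matrix.one_mulVec _)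

theorem SOd.act_zero {d : ℕ} (θ : SOd d) : θ.act 0 = 0 := congrArg (WithLp.toLp 2) (Matrix.mulVec_zero _)

instance (d : ℕ) : MeasurableSpace (SOd d) := borel _
instance (d : ℕ) : BorelSpace (SOd d) := ⟨rfl⟩

/-- The group `Isom(ℝ^d) = ℝ^d ⋊ SO(d)` of orientation-preserving isometries of `ℝ^d`,
where `(v₁,θ₁)·(v₂,θ₂) = (v₁ + θ₁ v₂, θ₁ θ₂)`. -/
def IsomRd (d : ℕ) : Type := Ed d × SOd d

namespace IsomRd

variable {d : ℕ}

/-- The translation part `v(g)` of an isometry `g = (v(g), θ(g))`. -/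
def v (g : IsomRd d) : Ed d := g.1

/-- The rotation part `θ(g)` of an isometry `g = (v(g), θ(g))`; i.e. the quotient
homomorphism `θ : Isom(ℝ^d) → SO(d)`. -/
def rot (g : IsomRd d) : SOd d := g.2

instance : One (IsomRd d) := ⟨((0 : Ed d), (1 : SOd d))⟩
instance : Mul (IsomRd d) := ⟨fun g h => (g.1 + g.2.act h.1, g.2 * h.2)⟩
instance : Inv (IsomRd d) := ⟨fun g => (-(g.2⁻¹.act g.1), g.2⁻¹)⟩

instance : Group (IsomRd d) where
  mul_assoc g h k := by
    show (_, _) = (_, _)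
    rw [Prod.mk.injEq]
    constructor
    · show g.1 + g.2.act h.1 + (g.2 * h.2).act k.1 = g.1 + g.2.act (h.1 + h.2.act k.1)
      rw [SOd.act_add, SOd.act_mul, add_assoc]
    · exact mul_assoc _ _ _
  one_mul g := by
    show ((0 : Ed d) + (1 : SOd d).act g.1, 1 * g.2) = g
    rw [SOd.one_act, zero_add, one_mul]
    rfl
  mul_one g := by
    show (g.1 + g.2.act 0, g.2 * 1) = g
    rw [SOd.act_zero, add_zero, mul_one]
    rfl
  inv_mul_cancel g := by
    show (-(g.2⁻¹.act g.1) + g.2⁻¹.act g.1, g.2⁻¹ * g.2) = ((0 : Ed d), (1 : SOd d))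
    rw [neg_add_cancel, inv_mul_cancel]

instance : TopologicalSpace (IsomRd d) := inferInstanceAs (TopologicalSpace (Ed d × SOd d))
instance : MeasurableSpace (IsomRd d) := borel _
instance : BorelSpace (IsomRd d) := ⟨rfl⟩

/-- The natural isometric action of `Isom(ℝ^d)` on `ℝ^d`: `g(x) = v(g) + θ(g)x`. -/
def isomAct (g : IsomRd d) (x : Ed d) : Ed d := g.v + g.rot.act x

end IsomRd

/-- `e(y) = e^{-2πiy}`. -/
def eChar (y : ℝ) : ℂ := Complex.exp (-(2 * Real.pi * y) * Complex.I)

/-- The unitary representation `π_x : Isom(ℝ^d) → U(L²(SO(d)))` given by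
`(π_x(g)φ)(ω) = e(⟨ωx, v(g)⟩)·φ(θ(g)⁻¹ω)`, applied to a function `φ` on `SO(d)`. -/
def piRep {d : ℕ} (x : Ed d) (g : IsomRd d) (φ : SOd d → ℂ) : SOd d → ℂ :=
  fun ω => eChar (inner ℝ (SOd.act ω x) (IsomRd.v g) : ℝ) * φ ((IsomRd.rot g)⁻¹ * ω)

/-- The averaging operator `T_x = π_x(μ) = ∫_G π_x(g) dμ(g)` on `L²(SO(d))`, i.e.
`(T_x φ)(ω) = ∫_G e(⟨ωx, v(g)⟩)·φ(θ(g)⁻¹ω) dμ(g)`. -/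
def Tav {d : ℕ} (μ : Measure (IsomRd d)) (x : Ed d) (φ : SOd d → ℂ) : SOd d → ℂ :=
  fun ω => ∫ g, piRep x g φ ω ∂μ

/-- The operator norm `‖T_x‖` of `T_x = π_x(μ)` on `L²(SO(d), mSO)`, as the supremum of
`‖T_x φ‖₂` over unit vectors `φ ∈ L²(SO(d))`. -/
def TavNorm {d : ℕ} (μ : Measure (IsomRd d)) (mSO : Measure (SOd d)) (x : Ed d) : ℝ≥0∞ :=
  ⨆ (φ : SOd d → ℂ) (_ : MemLp φ 2 mSO ∧ eLpNorm φ 2 mSO = 1), eLpNorm (Tav μ x φ) 2 mSO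

/-- A measure `μ` on a group is symmetric if it is invariant under `g ↦ g⁻¹`. -/
def MeasureIsSymmetric {G : Type} [Group G] [MeasurableSpace G] (μ : Measure G) : Prop :=
  Measure.map (fun g => g⁻¹) μ = μ

/-- The unit sphere `𝕊^{d-1} ⊆ ℝ^d`. -/
abbrev Sph (d : ℕ) : Type := ↥(Metric.sphere (0 : Ed d) 1)

theorem SOd.norm_act {d : ℕ} (θ : SOd d) (x : Ed d) : ‖SOd.act θ x‖ = ‖x‖ := by
  have key : @inner ℝ _ _ (SOd.act θ x) (SOd.act θ x) = @inner ℝ _ _ x x := by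
    have h1 : ∀ a b : Ed d, @inner ℝ _ _ a b = dotProduct (WithLp.ofLp a) (WithLp.ofLp b) := by
      intro a b
      simp [PiLp.inner_apply, dotProduct, mul_comm]
    rw [h1, h1]
    simp only [SOd.act, WithLp.ofLp_toLp]
    rw [dotProduct_mulVec]
    have h2 : (Matrix.mulVec θ.1 (WithLp.ofLp x)) ᵥ* θ.1 = (θ.1ᵀ * θ.1) *ᵥ (WithLp.ofLp x) := by
      rw [← Matrix.mulVec_transpose, Matrix.mulVec_mulVec]
    have h3 : θ.1ᵀ * θ.1 = 1 := by
      have := θ.2.1.1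
      rwa [Matrix.star_eq_conjTranspose, Matrix.conjTranspose_eq_transpose_of_trivial] at this
    rw [h2, h3, Matrix.one_mulVec]
  have := congrArg Real.sqrt key
  rwa [real_inner_self_eq_norm_sq, real_inner_self_eq_norm_sq, Real.sqrt_sq (norm_nonneg _),
    Real.sqrt_sq (norm_nonneg _)] at this

/-- The action of `SO(d)` on the unit sphere `𝕊^{d-1}`. -/
def SOd.actS {d : ℕ} (θ : SOd d) (ξ : Sph d) : Sph d :=
  ⟨θ.act ξ.1, by
    rw [mem_sphere_zero_iff_norm, SOd.norm_act]
    exact mem_sphere_zero_iff_norm.mp ξ.2⟩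

/-- The unitary representation `ρ_r : Isom(ℝ^d) → U(L²(𝕊^{d-1}))` given by
`(ρ_r(g)φ)(ξ) = e(r⟨ξ, v(g)⟩)·φ(θ(g)⁻¹ξ)`, applied to a function `φ` on `𝕊^{d-1}`. -/
def rhoRep {d : ℕ} (r : ℝ) (g : IsomRd d) (φ : Sph d → ℂ) : Sph d → ℂ :=
  fun ξ => eChar (r * (inner ℝ (ξ : Ed d) (IsomRd.v g) : ℝ)) * φ (SOd.actS (IsomRd.rot g)⁻¹ ξ)

/-- The averaging operator `S_r = ρ_r(μ) = ∫_G ρ_r(g) dμ(g)` on `L²(𝕊^{d-1})`. -/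
def Sav {d : ℕ} (μ : Measure (IsomRd d)) (r : ℝ) (φ : Sph d → ℂ) : Sph d → ℂ :=
  fun ξ => ∫ g, rhoRep r g φ ξ ∂μ

/-- The operator norm `‖S_r‖` of `S_r = ρ_r(μ)` on `L²(𝕊^{d-1}, mS)`, as the supremum of
`‖S_r φ‖₂` over unit vectors `φ ∈ L²(𝕊^{d-1})`. -/
def SavNorm {d : ℕ} (μ : Measure (IsomRd d)) (mS : Measure (Sph d)) (r : ℝ) : ℝ≥0∞ :=
  ⨆ (φ : Sph d → ℂ) (_ : MemLp φ 2 mS ∧ eLpNorm φ 2 mS = 1), eLpNorm (Sav μ r φ) 2 mS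


section Aux

variable {d : ℕ}

theorem SOd.coe_mul (a b : SOd d) : ((a * b : SOd d) : Matrix (Fin d) (Fin d) ℝ) = a.1 * b.1 := rfl

theorem SOd.coe_inv (a : SOd d) : ((a⁻¹ : SOd d) : Matrix (Fin d) (Fin d) ℝ) = star a.1 := rfl

instance : IsTopologicalGroup (SOd d) where
  continuous_mul := by
    apply continuous_induced_rng.2
    exact (continuous_subtype_val.comp continuous_fst).matrix_mul
      (continuous_subtype_val.comp continuous_snd)
  continuous_inv := by
    apply continuous_induced_rng.2
    exact continuous_subtype_val.matrix_conjTranspose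

instance : CompactSpace (SOd d) := by
  have h : IsCompact {A : Matrix (Fin d) (Fin d) ℝ | A ∈ Matrix.specialOrthogonalGroup (Fin d) ℝ} := by
    have hK : IsCompact (Set.univ.pi fun _ : Fin d =>
        (Set.univ.pi fun _ : Fin d => Set.Icc (-1:ℝ) 1)) :=
      isCompact_univ_pi fun _ => isCompact_univ_pi fun _ => isCompact_Icc
    apply hK.of_isClosed_subset
    · have h1 : IsClosed ((fun A : Matrix (Fin d) (Fin d) ℝ => A * star A) ⁻¹' {1}) :=
        (isClosed_singleton).preimage (continuous_id.matrix_mul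
          continuous_id.matrix_conjTranspose)
      have h2 : IsClosed ((fun A : Matrix (Fin d) (Fin d) ℝ => A.det) ⁻¹' {1}) :=
        (isClosed_singleton).preimage continuous_id.matrix_det
      have : {A : Matrix (Fin d) (Fin d) ℝ | A ∈ Matrix.specialOrthogonalGroup (Fin d) ℝ}
          = ((fun A : Matrix (Fin d) (Fin d) ℝ => A * star A) ⁻¹' {1})
            ∩ ((fun A : Matrix (Fin d) (Fin d) ℝ => A.det) ⁻¹' {1}) := by
        ext A
        simp [Matrix.mem_specialOrthogonalGroup_iff, Matrix.mem_orthogonalGroup_iff,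
          Matrix.star_eq_conjTranspose, Matrix.conjTranspose_eq_transpose_of_trivial]
      rw [this]
      exact h1.inter h2
    · intro A hA
      obtain ⟨h1, -⟩ := Matrix.mem_specialOrthogonalGroup_iff.mp hA
      replace h1 := (Matrix.mem_orthogonalGroup_iff (Fin d) ℝ).mp h1
      refine Set.mem_univ_pi.2 fun i => Set.mem_univ_pi.2 fun j => ?_
      have hsum : ∑ k, A i k * A i k = 1 := by
        have := congrFun (congrFun h1 i) i
        erw [Matrix.mul_apply] at this
        simp at this
        exact this
      have hle : A i j * A i j ≤ 1 := by
        rw [← hsum]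
        exact Finset.single_le_sum (fun k _ => mul_self_nonneg (A i k))
          (Finset.mem_univ j)
      have := abs_le_one_iff_mul_self_le_one.2 hle
      exact Set.mem_Icc.2 (abs_le.1 this)
  exact isCompact_iff_compactSpace.mp h

instance : T2Space (SOd d) := inferInstance

set_option synthInstance.maxHeartbeats 1000000 in
instance : LocallyCompactSpace (SOd d) := WeaklyLocallyCompactSpace.locallyCompactSpace


theorem mSO_map_mul_right (mSO : Measure (SOd d)) [mSO.IsHaarMeasure]
    [IsProbabilityMeasure mSO] (g : SOd d) : Measure.map (· * g) mSO = mSO := by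
  have hmeas : Measurable (· * g : SOd d → SOd d) := (continuous_mul_right g).measurable
  set ν := Measure.map (· * g) mSO with hν
  haveI : IsProbabilityMeasure ν := Measure.isProbabilityMeasure_map hmeas.aemeasurable
  haveI : ν.IsMulLeftInvariant := by
    constructor
    intro h
    rw [hν, Measure.map_map (measurable_const_mul h) hmeas]
    have heq : (fun x => h * x) ∘ (· * g) = (· * g) ∘ (fun x => h * x) := by
      funext y; simp [mul_assoc]
    rw [heq, ← Measure.map_map hmeas (measurable_const_mul h),
      MeasureTheory.map_mul_left_eq_self mSO h]
  haveI : ν.IsOpenPosMeasure := by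
    constructor
    intro U hU hne
    rw [hν, Measure.map_apply hmeas hU.measurableSet]
    apply (hU.preimage (continuous_mul_right g)).measure_ne_zero mSO
    obtain ⟨y, hy⟩ := hne
    exact ⟨y * g⁻¹, by simpa using hy⟩
  haveI : ν.IsHaarMeasure := by constructor
  exact Measure.isHaarMeasure_eq_of_isProbabilityMeasure ν mSO


theorem exists_SOd_act (hd : 3 ≤ d) (w : Ed d) (hw : ‖w‖ = 1) :
    ∃ σ : SOd d, σ.act (EuclideanSpace.single (⟨0, by omega⟩ : Fin d) (1:ℝ)) = w := by
  set i0 : Fin d := ⟨0, by omega⟩ with hi0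
  set i1 : Fin d := ⟨1, by omega⟩ with hi1
  have hi01 : i0 ≠ i1 := by simp [hi0, hi1, Fin.ext_iff]
  have card : Module.finrank ℝ (Ed d) = Fintype.card (Fin d) := by
    simp [finrank_euclideanSpace]
  have hv : Orthonormal ℝ (({i0} : Set (Fin d)).restrict (fun _ => w)) := by
    rw [orthonormal_iff_ite]
    intro i j
    have hij : i = j := Subtype.ext (i.2.trans j.2.symm)
    subst hij
    rw [if_pos rfl]
    show (inner ℝ w w : ℝ) = 1
    rw [real_inner_self_eq_norm_mul_norm, hw, mul_one]
  obtain ⟨b, hb⟩ := hv.exists_orthonormalBasis_extension_of_card_eq card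
  have hb0 : b i0 = w := hb i0 rfl
  set M : Matrix (Fin d) (Fin d) ℝ := Matrix.of fun i j => b j i with hM
  have hMTM : Mᵀ * M = 1 := by
    ext j k
    have hbo := b.orthonormal
    rw [orthonormal_iff_ite] at hbo
    have h := hbo j k
    rw [PiLp.inner_apply] at h
    simp only [RCLike.inner_apply, starRingEnd_apply, star_trivial] at h
    rw [Matrix.mul_apply, Matrix.one_apply]
    simpa [hM, Matrix.transpose_apply, Matrix.of_apply, mul_comm] using h
  have hdet : M.det * M.det = 1 := by
    have h := congrArg Matrix.det hMTM
    rwa [Matrix.det_mul, Matrix.det_transpose, Matrix.det_one] at h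
  set D : Matrix (Fin d) (Fin d) ℝ :=
    Matrix.diagonal (fun j => if j = i1 then M.det else 1) with hD
  have hDT : Dᵀ = D := Matrix.diagonal_transpose _
  have hDD : D * D = 1 := by
    rw [hD, Matrix.diagonal_mul_diagonal]
    have heq : (fun j => (if j = i1 then M.det else 1) * (if j = i1 then M.det else 1))
        = fun _ => (1:ℝ) := by
      funext j
      by_cases hj : j = i1 <;> simp [hj, hdet]
    rw [heq, Matrix.diagonal_one]
  set N := M * D with hNdef
  have hN : Nᵀ * N = 1 := by
    rw [hNdef, Matrix.transpose_mul, hDT, mul_assoc, ← mul_assoc Mᵀ M D, hMTM, one_mul, hDD]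
  have hNdet : N.det = 1 := by
    rw [hNdef, Matrix.det_mul, Matrix.det_diagonal]
    rw [Finset.prod_ite_eq' Finset.univ i1 (fun _ => M.det)]
    simpa using hdet
  refine ⟨⟨N, ?_⟩, ?_⟩
  · rw [Matrix.mem_specialOrthogonalGroup_iff]
    refine ⟨?_, hNdet⟩
    rw [Matrix.mem_orthogonalGroup_iff]
    have hstar : star N = Nᵀ := by
      rw [Matrix.star_eq_conjTranspose, Matrix.conjTranspose_eq_transpose_of_trivial]
    exact mul_eq_one_comm.mp hN
  · show WithLp.toLp 2 (N.mulVec (WithLp.ofLp (EuclideanSpace.single i0 (1:ℝ)))) = w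
    ext i
    simp only [PiLp.toLp_apply]
    have h1 : (EuclideanSpace.single i0 (1:ℝ) : Fin d → ℝ) = Pi.single i0 1 := rfl
    rw [Matrix.mulVec, dotProduct]
    have h2 : ∀ j, N i j * (EuclideanSpace.single i0 (1:ℝ)) j
        = if j = i0 then N i i0 else 0 := by
      intro j
      rw [EuclideanSpace.single_apply]
      by_cases hj : j = i0 <;> simp [hj]
    rw [Finset.sum_congr rfl fun j _ => h2 j, Finset.sum_ite_eq' Finset.univ i0 (fun _ => N i i0)]
    have h3 : N i i0 = w i := by
      rw [hNdef, Matrix.mul_apply]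
      have h4 : ∀ k, M i k * D k i0 = if k = i0 then M i i0 else 0 := by
        intro k
        rw [hD, Matrix.diagonal_apply]
        by_cases hk : k = i0
        · subst hk
          simp [hi01]
        · simp [hk]
      rw [Finset.sum_congr rfl fun k _ => h4 k,
        Finset.sum_ite_eq' Finset.univ i0 (fun _ => M i i0)]
      simp [hM, hb0]
    simp [h3]


theorem SOd.actS_mul (a b : SOd d) (xi : Sph d) :
    (a * b).actS xi = a.actS (b.actS xi) := Subtype.ext (SOd.act_mul a b xi.1)

theorem SOd.one_actS (xi : Sph d) : (1 : SOd d).actS xi = xi := Subtype.ext (SOd.one_act xi.1)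

theorem exists_SOd_actS (hd : 3 ≤ d) (xi eta : Sph d) : ∃ σ : SOd d, σ.actS xi = eta := by
  obtain ⟨σ₁, h1⟩ := exists_SOd_act hd xi (mem_sphere_zero_iff_norm.mp xi.2)
  obtain ⟨σ₂, h2⟩ := exists_SOd_act hd eta (mem_sphere_zero_iff_norm.mp eta.2)
  refine ⟨σ₂ * σ₁⁻¹, Subtype.ext ?_⟩
  show (σ₂ * σ₁⁻¹).act xi.1 = eta.1
  have h3 : σ₁⁻¹.act xi.1 = EuclideanSpace.single (⟨0, by omega⟩ : Fin d) (1:ℝ) := by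
    rw [← h1, ← SOd.act_mul, inv_mul_cancel, SOd.one_act]
  rw [SOd.act_mul, h3, h2]

theorem continuous_act_pair :
    Continuous fun p : SOd d × Ed d => SOd.act p.1 p.2 := by
  show Continuous fun p : SOd d × Ed d =>
    WithLp.toLp 2 (Matrix.mulVec p.1.1 (WithLp.ofLp p.2))
  refine (PiLp.continuous_toLp 2 (fun _ : Fin d => ℝ)).comp ?_
  exact ((continuous_subtype_val.comp continuous_fst).matrix_mulVec
    ((PiLp.continuous_ofLp 2 (fun _ : Fin d => ℝ)).comp continuous_snd))

theorem continuous_actS_pair :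
    Continuous fun p : SOd d × Sph d => SOd.actS p.1 p.2 := by
  apply continuous_induced_rng.2
  exact continuous_act_pair.comp (continuous_fst.prodMk
    (continuous_subtype_val.comp continuous_snd))

theorem measurable_actS_pair :
    Measurable fun p : SOd d × Sph d => SOd.actS p.1 p.2 :=
  continuous_actS_pair.measurable

theorem measurable_actS (σ : SOd d) : Measurable fun xi : Sph d => SOd.actS σ xi :=
  (continuous_actS_pair.comp (continuous_const.prodMk continuous_id)).measurable

theorem measurable_actS' (u : Sph d) : Measurable fun ω : SOd d => SOd.actS ω u :=
  (continuous_actS_pair.comp (continuous_id.prodMk continuous_const)).measurable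

theorem map_actS_eq (hd : 3 ≤ d)
    (mSO : Measure (SOd d)) [mSO.IsHaarMeasure] [IsProbabilityMeasure mSO]
    (mS : Measure (Sph d)) [IsProbabilityMeasure mS]
    (hrotinv : ∀ θ : SOd d, Measure.map (SOd.actS θ) mS = mS) (u : Sph d) :
    Measure.map (fun ω : SOd d => SOd.actS ω u) mSO = mS := by
  have hmf : Measurable (fun ω : SOd d => SOd.actS ω u) := measurable_actS' u
  refine Measure.ext fun A hA => ?_
  rw [Measure.map_apply hmf hA]
  have claim1 : ∀ xi : Sph d, mSO ((fun ω : SOd d => SOd.actS ω xi) ⁻¹' A)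
      = mSO ((fun ω : SOd d => SOd.actS ω u) ⁻¹' A) := by
    intro xi
    obtain ⟨σ, hσ⟩ := exists_SOd_actS hd u xi
    have hcomp : (fun ω : SOd d => SOd.actS ω xi)
        = (fun ω : SOd d => SOd.actS ω u) ∘ (· * σ) := by
      funext ω
      simp only [Function.comp_apply, ← hσ, ← SOd.actS_mul]
    rw [hcomp, Set.preimage_comp,
      ← Measure.map_apply ((continuous_mul_right σ).measurable) (hmf hA),
      mSO_map_mul_right]
  have h1 : ∀ ω : SOd d,
      ∫⁻ xi, A.indicator (1 : Sph d → ℝ≥0∞) (SOd.actS ω xi) ∂mS = mS A := by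
    intro ω
    have := lintegral_map (measurable_one.indicator hA) (measurable_actS ω) (μ := mS)
    rw [hrotinv ω] at this
    rw [← this, lintegral_indicator_one hA]
  have h2 : ∀ xi : Sph d,
      ∫⁻ ω, A.indicator (1 : Sph d → ℝ≥0∞) (SOd.actS ω xi) ∂mSO
        = mSO ((fun ω : SOd d => SOd.actS ω u) ⁻¹' A) := by
    intro xi
    have hind : (fun ω : SOd d => A.indicator (1 : Sph d → ℝ≥0∞) (SOd.actS ω xi))
        = ((fun ω : SOd d => SOd.actS ω xi) ⁻¹' A).indicator (1 : SOd d → ℝ≥0∞) := by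
      funext ω
      by_cases hω : SOd.actS ω xi ∈ A <;> simp [Set.indicator_apply, hω]
    rw [hind, lintegral_indicator_one ((measurable_actS' xi) hA), claim1 xi]
  have swap := lintegral_lintegral_swap (μ := mSO) (ν := mS)
    (f := fun ω xi => A.indicator (1 : Sph d → ℝ≥0∞) (SOd.actS ω xi))
    (((measurable_one.indicator hA).comp measurable_actS_pair).aemeasurable)
  have left : ∫⁻ ω, (∫⁻ xi, A.indicator (1 : Sph d → ℝ≥0∞) (SOd.actS ω xi) ∂mS) ∂mSO
      = mS A := by
    simp only [h1]
    simp
  have right : ∫⁻ xi, (∫⁻ ω, A.indicator (1 : Sph d → ℝ≥0∞) (SOd.actS ω xi) ∂mSO) ∂mS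
      = mSO ((fun ω : SOd d => SOd.actS ω u) ⁻¹' A) := by
    simp only [h2]
    simp
  rw [← right, ← swap, left]

end Aux

/-- **Remark (comparison of the two averaging operators).**
Let `d ≥ 3`, `G = Isom(ℝ^d)` and let `μ` be a Borel probability measure on `G`.  Then for every
`x ∈ ℝ^d` one has `‖S_{|x|}‖ ≤ ‖T_x‖`, where `T_x = π_x(μ)` acts on `L²(SO(d))` (with its Haar
probability measure `mSO`) and `S_{|x|} = ρ_{|x|}(μ)` acts on `L²(𝕊^{d-1})` (with its
rotation-invariant probability measure `mS`). -/
theorem SavNorm_le_TavNorm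
    (d : ℕ) (hd : 3 ≤ d)
    (mSO : Measure (SOd d)) [mSO.IsHaarMeasure] [IsProbabilityMeasure mSO]
    (mS : Measure (Sph d)) [IsProbabilityMeasure mS]
    (hrotinv : ∀ θ : SOd d, Measure.map (SOd.actS θ) mS = mS)
    (μ : Measure (IsomRd d)) [IsProbabilityMeasure μ]
    (x : Ed d) :
    SavNorm μ mS ‖x‖ ≤ TavNorm μ mSO x := by
  obtain ⟨u, hxu⟩ : ∃ u : Sph d, x = ‖x‖ • (u : Ed d) := by
    by_cases hx : x = 0
    · refine ⟨⟨EuclideanSpace.single (⟨0, by omega⟩ : Fin d) (1:ℝ), ?_⟩, ?_⟩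
      · rw [mem_sphere_zero_iff_norm, EuclideanSpace.norm_single, norm_one]
      · simp [hx]
    · refine ⟨⟨‖x‖⁻¹ • x, ?_⟩, ?_⟩
      · rw [mem_sphere_zero_iff_norm, norm_smul, norm_inv, norm_norm,
          inv_mul_cancel₀ (norm_ne_zero_iff.2 hx)]
      · exact (smul_inv_smul₀ (norm_ne_zero_iff.2 hx) x).symm
  set f : SOd d → Sph d := fun ω => SOd.actS ω u with hf
  have hmf : Measurable f := measurable_actS' u
  have hmap : Measure.map f mSO = mS := map_actS_eq hd mSO mS hrotinv u
  refine iSup₂_le fun φ hφ => ?_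
  set ψ : SOd d → ℂ := fun ω => φ (f ω) with hψdef
  have hφm' : AEStronglyMeasurable φ (Measure.map f mSO) := by
    rw [hmap]; exact hφ.1.1
  have hψ : MemLp ψ 2 mSO := by
    have := (memLp_map_measure_iff hφm' hmf.aemeasurable).mp (by rw [hmap]; exact hφ.1)
    exact this
  have hψnorm : eLpNorm ψ 2 mSO = 1 := by
    have := eLpNorm_map_measure (p := 2) hφm' hmf.aemeasurable
    rw [hmap, hφ.2] at this
    exact this.symm
  have heq : Tav μ x ψ = fun ω => Sav μ ‖x‖ φ (f ω) := by
    funext ω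
    show (∫ g, piRep x g ψ ω ∂μ) = ∫ g, rhoRep ‖x‖ g φ (f ω) ∂μ
    congr 1
    funext g
    unfold piRep rhoRep
    have hact : SOd.act ω x = ‖x‖ • SOd.act ω (u : Ed d) := by
      conv_lhs => rw [hxu]
      exact congrArg (WithLp.toLp 2) (Matrix.mulVec_smul ω.1 ‖x‖ (WithLp.ofLp (u : Ed d)))
    have h1 : (inner ℝ (SOd.act ω x) (IsomRd.v g) : ℝ)
        = ‖x‖ * (inner ℝ ((f ω : Sph d) : Ed d) (IsomRd.v g) : ℝ) := by
      rw [hact, real_inner_smul_left]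
      rfl
    have h2 : ψ ((IsomRd.rot g)⁻¹ * ω) = φ (SOd.actS (IsomRd.rot g)⁻¹ (f ω)) := by
      rw [hψdef]
      simp only [hf, SOd.actS_mul]
    rw [h1, h2]
  calc eLpNorm (Sav μ ‖x‖ φ) 2 mS
      = eLpNorm (Sav μ ‖x‖ φ) 2 (Measure.map f mSO) := by rw [hmap]
    _ ≤ eLpNorm (fun ω => Sav μ ‖x‖ φ (f ω)) 2 mSO := by
        rw [eLpNorm_eq_lintegral_rpow_enorm_toReal (by norm_num) (by norm_num),
          eLpNorm_eq_lintegral_rpow_enorm_toReal (by norm_num) (by norm_num)]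
        refine ENNReal.rpow_le_rpow ?_ (by positivity)
        exact lintegral_map_le _ f
    _ = eLpNorm (Tav μ x ψ) 2 mSO := by rw [heq]
    _ ≤ TavNorm μ mSO x :=
        le_iSup₂ (f := fun (φ' : SOd d → ℂ)
          (_ : MemLp φ' 2 mSO ∧ eLpNorm φ' 2 mSO = 1) => eLpNorm (Tav μ x φ') 2 mSO)
          ψ ⟨hψ, hψnorm⟩
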